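/- Let d ≥ 1, let σ²: Fin d → ℝ≥0, let μ be the product measure on ℝ^d whose i-th coordinate is the centered real Gaussian measure with variance σᵢ², let ε ≥ 0, let w* ∈ ℝ^d, and let w̃(0) ∈ ℝ^d. Define the asymptotic GD solution w^GD ∈ ℝ^d by w^GD_i = w*_i if σᵢ² > 0 and w^GD_i = w̃ᵢ(0) if σᵢ² = 0. Then the adversarial risk of w^GD equals R_a(w^GD) = (ε²/2)·( ∑_{i : σᵢ² > 0} (w*_i)² + ∑_{i : σᵢ² = 0} (w̃ᵢ(0))² ). -/

import Mathlib

open MeasureTheory ProbabilityTheory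
open scoped NNReal

lemma sup_lemma (d : ℕ) (w : Fin d → ℝ) (ε : ℝ) (hε : 0 ≤ ε) :
    IsGreatest ((fun (Δ : Fin d → ℝ) =>
          (1/2 : ℝ) * ((0:ℝ) + ∑ i, Δ i * w i)^2) ''
        {Δ | Real.sqrt (∑ i, (Δ i)^2) ≤ ε}) (ε^2/2 * ∑ i, (w i)^2) := by
  constructor
  · by_cases hw : (∑ i, (w i)^2) = 0
    · refine ⟨0, ?_, ?_⟩
      · simp [hε]
      · have : ∀ i, w i = 0 := by
          intro i
          have := (Finset.sum_eq_zero_iff_of_nonneg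
            (fun i _ => sq_nonneg (w i))).mp hw i (Finset.mem_univ i)
          exact pow_eq_zero_iff (n := 2) (by norm_num) |>.mp this
        simp [this, hw]
    · have hwpos : 0 < ∑ i, (w i)^2 :=
        lt_of_le_of_ne (Finset.sum_nonneg fun i _ => sq_nonneg _) (Ne.symm hw)
      set S := ∑ i, (w i)^2 with hS
      have hsS : 0 < Real.sqrt S := Real.sqrt_pos.mpr hwpos
      refine ⟨fun i => ε / Real.sqrt S * w i, ?_, ?_⟩
      · have : ∑ i, (ε / Real.sqrt S * w i)^2 = ε^2 := by
          simp_rw [mul_pow, ← Finset.mul_sum, div_pow, Real.sq_sqrt hwpos.le]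
          field_simp
          rw [hS]
        simp only [Set.mem_setOf_eq, this, Real.sqrt_sq hε, le_refl]
      · simp only [zero_add]
        have : ∑ i, ε / Real.sqrt S * w i * w i = ε / Real.sqrt S * S := by
          rw [Finset.mul_sum]; exact Finset.sum_congr rfl fun i _ => by rw [mul_assoc, ← sq]
        rw [this, mul_pow, div_pow, Real.sq_sqrt hwpos.le]
        field_simp
  · rintro y ⟨Δ, hΔ, rfl⟩
    simp only [Set.mem_setOf_eq] at hΔ
    have h1 : ∑ i, (Δ i)^2 ≤ ε^2 := by
      have h0 : 0 ≤ ∑ i, (Δ i)^2 := Finset.sum_nonneg fun i _ => sq_nonneg _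
      calc ∑ i, (Δ i)^2 = (Real.sqrt (∑ i, (Δ i)^2))^2 := (Real.sq_sqrt h0).symm
        _ ≤ ε^2 := pow_le_pow_left₀ (Real.sqrt_nonneg _) hΔ 2
    have h2 : (∑ i, Δ i * w i)^2 ≤ (∑ i, (Δ i)^2) * ∑ i, (w i)^2 :=
      Finset.sum_mul_sq_le_sq_mul_sq _ _ _
    have h3 : (∑ i, Δ i * w i)^2 ≤ ε^2 * ∑ i, (w i)^2 :=
      h2.trans (mul_le_mul_of_nonneg_right h1 (Finset.sum_nonneg fun i _ => sq_nonneg _))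
    simp only [zero_add]
    nlinarith

/-- The adversarial risk under the product Gaussian measure. -/
noncomputable def advRisk (d : ℕ) (σsq : Fin d → ℝ≥0) (wstar : Fin d → ℝ) (ε : ℝ)
    (w : Fin d → ℝ) : ℝ :=
  ∫ x : Fin d → ℝ,
      sSup ((fun (Δ : Fin d → ℝ) =>
          (1/2) * ((∑ i, x i * (w i - wstar i)) + ∑ i, Δ i * w i)^2) ''
        {Δ | Real.sqrt (∑ i, (Δ i)^2) ≤ ε})
      ∂(Measure.pi fun i => gaussianReal 0 (σsq i))

/-- The adversarial risk of the asymptotic GD solution (equal to `w*` on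
relevant frequencies and to the initialization on irrelevant ones):
`R_a(w^GD) = (ε²/2)(∑_{σᵢ²>0} (wᵢ*)² + ∑_{σᵢ²=0} (w̃ᵢ(0))²)`. -/
theorem adv_risk_gd_solution (d : ℕ) (hd : 1 ≤ d)
    (σsq : Fin d → ℝ≥0) (ε : ℝ) (hε : 0 ≤ ε) (wstar w0 : Fin d → ℝ)
    (wGD : Fin d → ℝ) (hwGD : ∀ i, wGD i = if 0 < σsq i then wstar i else w0 i) :
    advRisk d σsq wstar ε wGD
      = ε^2 / 2 *
        ((∑ i ∈ Finset.univ.filter (fun i => 0 < σsq i), (wstar i)^2)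
          + ∑ i ∈ Finset.univ.filter (fun i => σsq i = 0), (w0 i)^2) := by
  set μ := Measure.pi fun i => gaussianReal 0 (σsq i) with hμ
  have hae : ∀ᵐ x ∂μ, ∑ i, x i * (wGD i - wstar i) = 0 := by
    have h : ∀ᵐ x ∂μ, ∀ i, x i * (wGD i - wstar i) = 0 := by
      rw [ae_all_iff]
      intro i
      by_cases hi : 0 < σsq i
      · filter_upwards with x
        rw [hwGD i, if_pos hi]; ring
      · have hσ : σsq i = 0 := le_antisymm (not_lt.mp hi) zero_le
        have h0 : (gaussianReal 0 (σsq i)) {y : ℝ | y ≠ 0} = 0 := by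
          rw [hσ, gaussianReal_zero_var]
          have hs : {y : ℝ | y ≠ 0} = {(0:ℝ)}ᶜ := rfl
          rw [hs, Measure.dirac_apply' _ (measurableSet_singleton (0:ℝ)).compl]
          simp
        have : μ {x | ¬ (x i * (wGD i - wstar i) = 0)} = 0 := by
          refine measure_mono_null ?_
            (Measure.pi_eval_preimage_null (μ := fun i => gaussianReal 0 (σsq i)) h0)
          intro x hx
          simp only [Set.mem_setOf_eq, mul_eq_zero, not_or] at hx
          exact hx.1
        exact this
    filter_upwards [h] with x hx
    exact Finset.sum_eq_zero fun i _ => hx i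
  have hconst : ∀ᵐ x ∂μ,
      sSup ((fun (Δ : Fin d → ℝ) =>
          (1/2 : ℝ) * ((∑ i, x i * (wGD i - wstar i)) + ∑ i, Δ i * wGD i)^2) ''
        {Δ | Real.sqrt (∑ i, (Δ i)^2) ≤ ε}) = ε^2/2 * ∑ i, (wGD i)^2 := by
    filter_upwards [hae] with x hx
    rw [hx]
    exact (sup_lemma d wGD ε hε).csSup_eq
  have hsum : ∑ i, (wGD i)^2 = (∑ i ∈ Finset.univ.filter (fun i => 0 < σsq i), (wstar i)^2)
      + ∑ i ∈ Finset.univ.filter (fun i => σsq i = 0), (w0 i)^2 := by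
    rw [← Finset.sum_filter_add_sum_filter_not Finset.univ (fun i => 0 < σsq i)
      (fun i => (wGD i)^2)]
    congr 1
    · exact Finset.sum_congr rfl fun i hi => by rw [hwGD i, if_pos (Finset.mem_filter.mp hi).2]
    · refine Finset.sum_congr ?_ fun i hi => ?_
      · ext j
        simp [pos_iff_ne_zero]
      · have h2 := (Finset.mem_filter.mp hi).2
        rw [hwGD i, if_neg (by simp [h2])]
  rw [advRisk, ← hμ, integral_congr_ae hconst, integral_const]
  simp [hsum, measure_univ]
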